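/- Let G be a simple graph and let G' be obtained from G by performing a finite sequence of k double subdivisions (each replacing some edge by a path of length 3, adding 2 new vertices). Then the independence number of G' equals the independence number of G plus k; equivalently, G has an independent set of size s if and only if G' has an independent set of size s + (|V(G')| − |V(G)|)/2. -/

import Mathlib

/-- The independence number of a graph, as the supremum of sizes of independent sets. -/
noncomputable def myIndepNum {V : Type} (G : SimpleGraph V) : ℕ :=
  sSup {n : ℕ | ∃ s : Finset V, s.card = n ∧
    ∀ a ∈ s, ∀ b ∈ s, a ≠ b → ¬ G.Adj a b}

/-- `IsDoubleSubdivision G u v G'` : `G'` (on `V ⊕ Fin 2`) is obtained from `G` by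
replacing the edge `uv` by the path `u – inr 0 – inr 1 – v`. -/
def IsDoubleSubdivision {V : Type} (G : SimpleGraph V) (u v : V)
    (G' : SimpleGraph (V ⊕ Fin 2)) : Prop :=
  G.Adj u v ∧
  ∀ x y : V ⊕ Fin 2, G'.Adj x y ↔
    ((∃ a b : V, x = Sum.inl a ∧ y = Sum.inl b ∧ G.Adj a b ∧
        ¬((a = u ∧ b = v) ∨ (a = v ∧ b = u))) ∨
     (x = Sum.inl u ∧ y = Sum.inr 0) ∨ (x = Sum.inr 0 ∧ y = Sum.inl u) ∨
     (x = Sum.inr 0 ∧ y = Sum.inr 1) ∨ (x = Sum.inr 1 ∧ y = Sum.inr 0) ∨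
     (x = Sum.inr 1 ∧ y = Sum.inl v) ∨ (x = Sum.inl v ∧ y = Sum.inr 1))

/-- `EvenSubdivisionSeq G G' k` : `G'` is obtained from `G` by a sequence of `k`
double subdivisions. -/
inductive EvenSubdivisionSeq : {V : Type} → SimpleGraph V → {W : Type} → SimpleGraph W →
    ℕ → Prop
  | refl {V : Type} (G : SimpleGraph V) : EvenSubdivisionSeq G G 0
  | step {V W : Type} {G : SimpleGraph V} {H : SimpleGraph W} {k : ℕ} (u v : W)
      (H' : SimpleGraph (W ⊕ Fin 2)) :
      EvenSubdivisionSeq G H k → IsDoubleSubdivision H u v H' →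
      EvenSubdivisionSeq G H' (k + 1)

def IndepIn {V : Type} (G : SimpleGraph V) (t : Finset V) : Prop :=
  ∀ a ∈ t, ∀ b ∈ t, a ≠ b → ¬ G.Adj a b

lemma stepA {V : Type} {G : SimpleGraph V} {u v : V} {G' : SimpleGraph (V ⊕ Fin 2)}
    (h : IsDoubleSubdivision G u v G') {t : Finset V} (ht : IndepIn G t) :
    ∃ t' : Finset (V ⊕ Fin 2), t'.card = t.card + 1 ∧ IndepIn G' t' := by
  classical
  have hinl : ∀ a ∈ t, ∀ b ∈ t, ¬ G'.Adj (Sum.inl a) (Sum.inl b) := by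
    intro a ha b hb hadj
    rw [h.2] at hadj
    rcases hadj with ⟨a', b', ha1, hb1, hab', _⟩ | ⟨_, h2⟩ | ⟨h2, _⟩ | ⟨h2, _⟩ | ⟨h2, _⟩ |
      ⟨h2, _⟩ | ⟨_, h2⟩
    · cases Sum.inl.inj ha1; cases Sum.inl.inj hb1
      exact ht a ha b hb (G.ne_of_adj hab') hab'
    all_goals simp at h2
  have main : ∀ w : V ⊕ Fin 2, (∀ a : V, w ≠ Sum.inl a) →
      (∀ a ∈ t, ¬ G'.Adj w (Sum.inl a) ∧ ¬ G'.Adj (Sum.inl a) w) →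
      ∃ t' : Finset (V ⊕ Fin 2), t'.card = t.card + 1 ∧ IndepIn G' t' := by
    intro w hwl hw
    have hnm : w ∉ t.image Sum.inl := by
      simp only [Finset.mem_image]
      rintro ⟨a, -, rfl⟩
      exact hwl a rfl
    refine ⟨insert w (t.image Sum.inl), ?_, ?_⟩
    · rw [Finset.card_insert_of_notMem hnm, Finset.card_image_of_injective _ Sum.inl_injective]
    · intro x hx y hy hxy hadj
      simp only [Finset.mem_insert, Finset.mem_image] at hx hy
      rcases hx with rfl | ⟨a, ha, rfl⟩
      · rcases hy with rfl | ⟨b, hb, rfl⟩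
        · exact hxy rfl
        · exact (hw b hb).1 hadj
      · rcases hy with rfl | ⟨b, hb, rfl⟩
        · exact (hw a ha).2 hadj
        · exact hinl a ha b hb hadj
  have key : ∀ (a : V) (i : Fin 2), G'.Adj (Sum.inr i) (Sum.inl a) →
      (i = 0 ∧ a = u) ∨ (i = 1 ∧ a = v) := by
    intro a i hadj
    rw [h.2] at hadj
    rcases hadj with ⟨a', b', h1, h2, _, _⟩ | ⟨h1, h2⟩ | ⟨h1, h2⟩ | ⟨h1, h2⟩ | ⟨h1, h2⟩ |
      ⟨h1, h2⟩ | ⟨h1, h2⟩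
    · exact absurd h1 (by simp)
    · exact absurd h1 (by simp)
    · exact Or.inl ⟨Sum.inr.inj h1, Sum.inl.inj h2⟩
    · exact absurd h2 (by simp)
    · exact absurd h2 (by simp)
    · exact Or.inr ⟨Sum.inr.inj h1, Sum.inl.inj h2⟩
    · exact absurd h1 (by simp)
  by_cases hu : u ∈ t
  · have hvt : v ∉ t := fun hv => ht u hu v hv (G.ne_of_adj h.1) h.1
    refine main (Sum.inr 1) (by simp) ?_
    intro a ha
    have hone : ¬ G'.Adj (Sum.inr 1) (Sum.inl a) := by
      intro hadj
      rcases key a 1 hadj with ⟨h0, _⟩ | ⟨_, hv⟩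
      · exact absurd h0 (by decide)
      · exact hvt (hv ▸ ha)
    exact ⟨hone, fun hadj => hone (G'.adj_symm hadj)⟩
  · refine main (Sum.inr 0) (by simp) ?_
    intro a ha
    have hone : ¬ G'.Adj (Sum.inr 0) (Sum.inl a) := by
      intro hadj
      rcases key a 0 hadj with ⟨_, hu'⟩ | ⟨h0, _⟩
      · exact hu (hu' ▸ ha)
      · exact absurd h0 (by decide)
    exact ⟨hone, fun hadj => hone (G'.adj_symm hadj)⟩

lemma stepB {V : Type} {G : SimpleGraph V} {u v : V} {G' : SimpleGraph (V ⊕ Fin 2)}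
    (h : IsDoubleSubdivision G u v G') {t' : Finset (V ⊕ Fin 2)} {s : ℕ}
    (hc : t'.card = s + 1) (ht : IndepIn G' t') :
    ∃ t : Finset V, t.card = s ∧ IndepIn G t := by
  classical
  set t0 := t'.toLeft with ht0
  have hmem : ∀ a : V, a ∈ t0 ↔ Sum.inl a ∈ t' := fun a => Finset.mem_toLeft
  by_cases huv : u ∈ t0 ∧ v ∈ t0
  · have h0 : Sum.inr 0 ∉ t' := fun hh =>
      ht _ ((hmem u).1 huv.1) _ hh (by simp) ((h.2 _ _).2 (by tauto))
    have h1 : Sum.inr 1 ∉ t' := fun hh =>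
      ht _ hh _ ((hmem v).1 huv.2) (by simp) ((h.2 _ _).2 (by tauto))
    have hR : t'.toRight = ∅ := by
      ext x
      fin_cases x <;> simp [h0, h1]
    have hcard : t0.card = s + 1 := by
      have := Finset.card_toLeft_add_card_toRight (u := t')
      rw [hR] at this; simpa [ht0, hc] using this
    refine ⟨t0.erase u, by rw [Finset.card_erase_of_mem huv.1, hcard]; omega, ?_⟩
    intro a ha b hb hab hadj
    have hau : a ≠ u := Finset.ne_of_mem_erase ha
    have hbu : b ≠ u := Finset.ne_of_mem_erase hb
    have ha' := (hmem a).1 (Finset.mem_of_mem_erase ha)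
    have hb' := (hmem b).1 (Finset.mem_of_mem_erase hb)
    exact ht _ ha' _ hb' (by simp [hab]) ((h.2 _ _).2 (Or.inl ⟨a, b, rfl, rfl, hadj, by tauto⟩))
  · have hind : IndepIn G t0 := by
      intro a ha b hb hab hadj
      by_cases hp : (a = u ∧ b = v) ∨ (a = v ∧ b = u)
      · rcases hp with ⟨h1, h2⟩ | ⟨h1, h2⟩
        · exact huv ⟨by rw [← h1]; exact ha, by rw [← h2]; exact hb⟩
        · exact huv ⟨by rw [← h2]; exact hb, by rw [← h1]; exact ha⟩
      · exact ht _ ((hmem a).1 ha) _ ((hmem b).1 hb) (by simp [hab])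
          ((h.2 _ _).2 (Or.inl ⟨a, b, rfl, rfl, hadj, hp⟩))
    have hRle : t'.toRight.card ≤ 1 := by
      by_contra hgt
      push_neg at hgt
      have hsub : t'.toRight ⊆ {0, 1} := by
        intro x _; fin_cases x <;> simp
      have h2 : ({0, 1} : Finset (Fin 2)).card = 2 := by decide
      have heq := Finset.eq_of_subset_of_card_le hsub (by rw [h2]; omega)
      have h01 : Sum.inr 0 ∈ t' ∧ Sum.inr 1 ∈ t' := by
        constructor <;> rw [← Finset.mem_toRight, heq] <;> decide
      exact ht _ h01.1 _ h01.2 (by simp) ((h.2 _ _).2 (by tauto))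
    have hge : s ≤ t0.card := by
      have := Finset.card_toLeft_add_card_toRight (u := t')
      rw [← ht0] at this
      omega
    obtain ⟨t, hsub, hcard⟩ := Finset.exists_subset_card_eq hge
    exact ⟨t, hcard, fun a ha b hb hab => hind a (hsub ha) b (hsub hb) hab⟩

lemma seq_iff {V W : Type} {G : SimpleGraph V} {G' : SimpleGraph W} {k : ℕ}
    (h : EvenSubdivisionSeq G G' k) :
    ∀ s : ℕ, (∃ t : Finset V, t.card = s ∧ IndepIn G t) ↔
      (∃ t : Finset W, t.card = s + k ∧ IndepIn G' t) := by
  induction h with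
  | refl G => simp
  | step u v H' hseq hsub ih =>
    intro s
    rw [ih s]
    constructor
    · rintro ⟨t, hc, ht⟩
      obtain ⟨t', hc', ht'⟩ := stepA hsub ht
      exact ⟨t', by omega, ht'⟩
    · rintro ⟨t', hc', ht'⟩
      exact stepB hsub (show t'.card = _ + 1 by omega) ht'

lemma seq_card {V W : Type} {G : SimpleGraph V} {G' : SimpleGraph W} {k : ℕ}
    (h : EvenSubdivisionSeq G G' k) :
    Finite W → Finite V ∧ Nat.card W = Nat.card V + 2 * k := by
  induction h with
  | refl G => exact fun hW => ⟨hW, by omega⟩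
  | step u v H' hseq hsub ih =>
    rename_i Wm Gm Hm km
    intro hW
    haveI := hW
    haveI hWmid : Finite Wm := Finite.sum_left (Fin 2)
    obtain ⟨hV, hcard⟩ := ih hWmid
    refine ⟨hV, ?_⟩
    rw [Nat.card_sum]
    have h3 : Nat.card (Fin 2) = 2 := by simp
    omega

lemma bdd_indep {V : Type} [Fintype V] (G : SimpleGraph V) :
    BddAbove {n : ℕ | ∃ t : Finset V, t.card = n ∧ IndepIn G t} := by
  refine ⟨Fintype.card V, fun n hn => ?_⟩
  obtain ⟨t, hc, -⟩ := hn
  exact hc ▸ Finset.card_le_univ t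


/-- If `G'` is obtained from a finite simple graph `G` by `k` double
subdivisions, then `α(G') = α(G) + k`; equivalently, `G` has an independent set of size `s`
iff `G'` has one of size `s + (|V(G')| − |V(G)|)/2`. -/
theorem even_subdivision_indepNum {V W : Type} [Fintype V] [Fintype W]
    (G : SimpleGraph V) (G' : SimpleGraph W) (k : ℕ)
    (h : EvenSubdivisionSeq G G' k) :
    myIndepNum G' = myIndepNum G + k ∧
    ∀ s : ℕ,
      (∃ t : Finset V, t.card = s ∧ ∀ a ∈ t, ∀ b ∈ t, a ≠ b → ¬ G.Adj a b) ↔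
      (∃ t : Finset W, t.card = s + (Fintype.card W - Fintype.card V) / 2 ∧
        ∀ a ∈ t, ∀ b ∈ t, a ≠ b → ¬ G'.Adj a b) := by
  have hiff := seq_iff h
  have hWfin : Finite W := inferInstance
  obtain ⟨hVfin, hcard⟩ := seq_card h hWfin
  rw [Nat.card_eq_fintype_card, Nat.card_eq_fintype_card] at hcard
  have hk : (Fintype.card W - Fintype.card V) / 2 = k := by omega
  have hbG := bdd_indep G
  have hbG' := bdd_indep G'
  have h0 : (0 : ℕ) ∈ {n : ℕ | ∃ t : Finset V, t.card = n ∧ IndepIn G t} :=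
    ⟨∅, rfl, fun a ha => absurd ha (Finset.notMem_empty a)⟩
  constructor
  · have ha : myIndepNum G ∈ {n : ℕ | ∃ t : Finset V, t.card = n ∧ IndepIn G t} :=
      Nat.sSup_mem ⟨0, h0⟩ hbG
    have hle1 : myIndepNum G + k ≤ myIndepNum G' :=
      le_csSup hbG' ((hiff (myIndepNum G)).1 ha)
    have hb : myIndepNum G' ∈ {n : ℕ | ∃ t : Finset W, t.card = n ∧ IndepIn G' t} :=
      Nat.sSup_mem ⟨0, ∅, rfl, fun a ha => absurd ha (Finset.notMem_empty a)⟩ hbG'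
    have hkmem : k ∈ {n : ℕ | ∃ t : Finset W, t.card = n ∧ IndepIn G' t} := by
      have := (hiff 0).1 h0
      simpa using this
    have hbk : k ≤ myIndepNum G' := le_csSup hbG' hkmem
    have hsplit : myIndepNum G' = (myIndepNum G' - k) + k := by omega
    have : myIndepNum G' - k ∈ {n : ℕ | ∃ t : Finset V, t.card = n ∧ IndepIn G t} :=
      (hiff (myIndepNum G' - k)).2 (by rw [← hsplit]; exact hb)
    have hle2 : myIndepNum G' - k ≤ myIndepNum G := le_csSup hbG this
    unfold myIndepNum at *
    omega
  · intro s
    rw [hk]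
    exact hiff s
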